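/- Let R be a ring, let 0 → K →ι→ P →π→ M → 0 be a short exact sequence of R-modules with P projective, and let 0 → U →u→ V →p→ W → 0 be a short exact sequence of R-modules. Let G be the additive group of pairs (f, g) with f : K → U and g : P → V R-linear satisfying u ∘ f = g ∘ ι. For each (f, g) ∈ G the map p ∘ g vanishes on ker π = range ι (since p ∘ g ∘ ι = p ∘ u ∘ f = 0), so there is a unique R-linear map h : M → W with h ∘ π = p ∘ g; this defines an additive map Φ : G → Hom_R(M, W). Then Φ is surjective and its kernel equals {(f, g) ∈ G : range g ⊆ range u}. In particular, Φ induces an isomorphism of abelian groups G / {(f, g) ∈ G : range g ⊆ range u} ≅ Hom_R(M, W). -/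
import Mathlib


/-- The group of pairs `(f, g)` commuting with a projective resolution of `M` and
an extension `0 → U → V → W → 0`, modulo those pairs with `range g ⊆ range u`,
is isomorphic to `Hom_R(M, W)`. -/
theorem liftings_mod_factoring_iso_hom {R K P M U V W : Type*} [Ring R]
    [AddCommGroup K] [AddCommGroup P] [AddCommGroup M]
    [AddCommGroup U] [AddCommGroup V] [AddCommGroup W]
    [Module R K] [Module R P] [Module R M]
    [Module R U] [Module R V] [Module R W]
    -- the short exact sequence 0 → K → P → M → 0 with P projective
    (ι : K →ₗ[R] P) (π : P →ₗ[R] M)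
    (hι : Function.Injective ι) (hπ : Function.Surjective π)
    (hKPM : LinearMap.ker π = LinearMap.range ι)
    [Module.Projective R P]
    -- the short exact sequence 0 → U → V → W → 0
    (u : U →ₗ[R] V) (p : V →ₗ[R] W)
    (hu : Function.Injective u) (hp : Function.Surjective p)
    (hUVW : LinearMap.ker p = LinearMap.range u)
    -- the additive group G of pairs (f, g) with u ∘ f = g ∘ ι
    (G : AddSubgroup ((K →ₗ[R] U) × (P →ₗ[R] V)))
    (hG : ∀ fg : (K →ₗ[R] U) × (P →ₗ[R] V), fg ∈ G ↔ u ∘ₗ fg.1 = fg.2 ∘ₗ ι)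
    -- the additive map Φ : G → Hom_R(M, W), (f, g) ↦ h where h ∘ π = p ∘ g
    (Φ : G →+ (M →ₗ[R] W))
    (hΦ : ∀ fg : G, (Φ fg) ∘ₗ π = p ∘ₗ (fg : (K →ₗ[R] U) × (P →ₗ[R] V)).2) :
    Function.Surjective Φ ∧
    (∀ fg : G, fg ∈ Φ.ker ↔
      LinearMap.range (fg : (K →ₗ[R] U) × (P →ₗ[R] V)).2 ≤ LinearMap.range u) ∧
    Nonempty ((G ⧸ Φ.ker) ≃+ (M →ₗ[R] W)) := by
  have hsurj : Function.Surjective Φ := by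
    intro h
    obtain ⟨g, hg⟩ := Module.projective_lifting_property p (h ∘ₗ π) hp
    have hrange : ∀ k : K, g (ι k) ∈ LinearMap.range u := by
      intro k
      rw [← hUVW, LinearMap.mem_ker]
      have : p (g (ι k)) = h (π (ι k)) := by
        have := congrArg (fun φ => φ (ι k)) hg
        simpa using this
      rw [this]
      have : π (ι k) = 0 := by
        have : ι k ∈ LinearMap.ker π := by rw [hKPM]; exact ⟨k, rfl⟩
        simpa using this
      simp [this]
    let e := LinearEquiv.ofInjective u hu
    let f : K →ₗ[R] U := e.symm.toLinearMap ∘ₗ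
      LinearMap.codRestrict (LinearMap.range u) (g ∘ₗ ι) hrange
    have hf : u ∘ₗ f = g ∘ₗ ι := by
      ext k
      have : (u (f k) : V) = ((e (e.symm ⟨g (ι k), hrange k⟩)) : V) := rfl
      simp only [LinearMap.comp_apply]
      rw [this, e.apply_symm_apply]
    have hmem : (f, g) ∈ G := (hG (f, g)).mpr hf
    refine ⟨⟨(f, g), hmem⟩, ?_⟩
    apply LinearMap.ext
    intro m
    obtain ⟨x, rfl⟩ := hπ m
    have h1 := congrArg (fun φ => φ x) (hΦ ⟨(f, g), hmem⟩)
    have h2 := congrArg (fun φ => φ x) hg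
    simpa using h1.trans (by simpa using h2)
  have hker : ∀ fg : G, fg ∈ Φ.ker ↔
      LinearMap.range (fg : (K →ₗ[R] U) × (P →ₗ[R] V)).2 ≤ LinearMap.range u := by
    intro fg
    rw [AddMonoidHom.mem_ker]
    constructor
    · intro h0
      rintro v ⟨x, rfl⟩
      rw [← hUVW, LinearMap.mem_ker]
      have := congrArg (fun φ => φ x) (hΦ fg)
      simp only [LinearMap.comp_apply] at this
      rw [← this, h0]
      rfl
    · intro hle
      apply LinearMap.ext
      intro m
      obtain ⟨x, rfl⟩ := hπ m
      have := congrArg (fun φ => φ x) (hΦ fg)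
      simp only [LinearMap.comp_apply] at this
      rw [this]
      have : (fg : (K →ₗ[R] U) × (P →ₗ[R] V)).2 x ∈ LinearMap.ker p := by
        rw [hUVW]; exact hle ⟨x, rfl⟩
      simpa using this
  exact ⟨hsurj, hker, ⟨QuotientAddGroup.quotientKerEquivOfSurjective Φ hsurj⟩⟩
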